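/- Let Γ ↷ (X,ν) be a measurable measure-class-preserving action of a countable discrete group on a σ-finite measure space, let S ⊆ Γ be a finite symmetric subset containing the identity, and let Y ⊆ X be measurable with ν(Y) finite. Then for every measurable A ⊆ Y one has ν(A) ≤ ν̃_{Y,S}(A) ≤ |S|·√(ν(A)·ν(Y)); in particular ν̃_{Y,S}(Y) is finite. Moreover ν̃_{Y,S} and the restriction ν|_Y have the same null sets. -/

import Mathlib

open MeasureTheory ENNReal Filter
open scoped Classical

noncomputable section

/-- The Radon–Nikodym derivative `r(γ,x) = d(γ⁻¹_*ν)/dν (x)` of a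
measure-class-preserving action. -/
def rnd {Γ X : Type*} [Group Γ] [MulAction Γ X] [MeasurableSpace X]
    (ν : Measure X) (γ : Γ) (x : X) : ℝ≥0∞ :=
  Measure.rnDeriv (ν.map (fun y => γ⁻¹ • y)) ν x

/-- `σ_{Y,S}(x) = Σ_{s ∈ S, s·x ∈ Y} r(s,x)^{1/2}`. -/
def sigmaLoc {Γ X : Type*} [Group Γ] [MulAction Γ X] [MeasurableSpace X]
    (ν : Measure X) (S : Finset Γ) (Y : Set X) (x : X) : ℝ≥0∞ :=
  ∑ s ∈ S, if s • x ∈ Y then (rnd ν s x) ^ (1/2 : ℝ) else 0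

/-- The measure `ν̃_{Y,S}`, given by `dν̃_{Y,S} = σ_{Y,S} · d(ν|_Y)`. -/
def nuT {Γ X : Type*} [Group Γ] [MulAction Γ X] [MeasurableSpace X]
    (ν : Measure X) (S : Finset Γ) (Y : Set X) : Measure X :=
  (ν.restrict Y).withDensity (sigmaLoc ν S Y)

/-- The normalised local Markov kernel
`Π_{Y,S}(x,·) = (1/σ_{Y,S}(x)) Σ_{s ∈ S, s·x ∈ Y} r(s,x)^{1/2} δ_{s·x}`. -/
def locKer {Γ X : Type*} [Group Γ] [MulAction Γ X] [MeasurableSpace X]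
    (ν : Measure X) (S : Finset Γ) (Y : Set X) (x : X) : Measure X :=
  (sigmaLoc ν S Y x)⁻¹ •
    ∑ s ∈ S, (if s • x ∈ Y then (rnd ν s x) ^ (1/2 : ℝ) else 0) • Measure.dirac (s • x)

/-- The `ν̃_{Y,S}`-size of the boundary of `A ⊆ Y` with respect to `Π_{Y,S}`:
`|∂ A| = ∫_A Π_{Y,S}(x, Y∖A) dν̃_{Y,S}(x)`. -/
def mkBdry {Γ X : Type*} [Group Γ] [MulAction Γ X] [MeasurableSpace X]
    (ν : Measure X) (S : Finset Γ) (Y A : Set X) : ℝ≥0∞ :=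
  ∫⁻ x in A, locKer ν S Y x (Y \ A) ∂(nuT ν S Y)

/-- `Y` is a domain of Markov `S`-expansion: the Cheeger constant of the normalised local
Markov kernel `Π_{Y,S}` with respect to its reversing measure `ν̃_{Y,S}` is strictly
positive. -/
def MarkovSExpansion {Γ X : Type*} [Group Γ] [MulAction Γ X] [MeasurableSpace X]
    (ν : Measure X) (S : Finset Γ) (Y : Set X) : Prop :=
  0 < sInf { q : ℝ≥0∞ | ∃ A : Set X, MeasurableSet A ∧ A ⊆ Y ∧ 0 < nuT ν S Y A ∧
    nuT ν S Y A ≤ nuT ν S Y Y / 2 ∧ q = mkBdry ν S Y A / nuT ν S Y A }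

/-- **Proposition 3.14(1)-(2).** For a measure-class-preserving action
`Γ ↷ (X,ν)` on a σ-finite space, a finite symmetric set `S ∋ 1` and a measurable
`Y ⊆ X` with `ν(Y) < ∞`: for every measurable `A ⊆ Y` one has
`ν(A) ≤ ν̃_{Y,S}(A) ≤ |S|·√(ν(A)·ν(Y))`; in particular `ν̃_{Y,S}(Y) < ∞`.
Moreover `ν̃_{Y,S}` and `ν|_Y` have the same null sets. -/
theorem nuT_estimates {Γ X : Type*} [Group Γ] [Countable Γ] [MulAction Γ X]
    [MeasurableSpace X] (ν : Measure X) [SigmaFinite ν]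
    (hmeas : ∀ γ : Γ, Measurable (fun x : X => γ • x))
    (hmcp : ∀ γ : Γ, Measure.QuasiMeasurePreserving (fun x : X => γ • x) ν ν)
    (S : Finset Γ) (hsymm : ∀ s ∈ S, s⁻¹ ∈ S) (hone : (1 : Γ) ∈ S)
    (Y : Set X) (hY : MeasurableSet Y) (hYfin : ν Y < ⊤) :
    (∀ A : Set X, MeasurableSet A → A ⊆ Y →
        ν A ≤ nuT ν S Y A ∧
        nuT ν S Y A ≤ (S.card : ℝ≥0∞) * (ν A * ν Y) ^ (1/2 : ℝ)) ∧
    nuT ν S Y Y < ⊤ ∧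
    (∀ A : Set X, MeasurableSet A → (nuT ν S Y A = 0 ↔ (ν.restrict Y) A = 0)) := by
  classical
  -- measurability of each term
  have hσterm : ∀ s : Γ, Measurable fun x : X =>
      (if s • x ∈ Y then (rnd ν s x) ^ (1/2 : ℝ) else 0 : ℝ≥0∞) := by
    intro s
    exact Measurable.ite ((hmeas s) hY)
      ((Measure.measurable_rnDeriv _ _).pow_const _) measurable_const
  -- `rnd ν 1 = 1` a.e.
  have h1 : rnd ν (1 : Γ) =ᵐ[ν] fun _ => 1 := by
    have hid : (fun y : X => (1 : Γ)⁻¹ • y) = id := by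
      funext y; simp
    unfold rnd
    rw [hid, Measure.map_id]
    exact Measure.rnDeriv_self ν
  -- a.e. lower bound `1 ≤ σ` on `Y`
  have hσ1 : ∀ᵐ x ∂(ν.restrict Y), 1 ≤ sigmaLoc ν S Y x := by
    refine (ae_restrict_iff' hY).2 ?_
    filter_upwards [h1] with x hx hxY
    have hterm : (1 : ℝ≥0∞) =
        (if (1 : Γ) • x ∈ Y then (rnd ν (1 : Γ) x) ^ (1/2 : ℝ) else 0) := by
      simp [one_smul, hxY, hx]
    exact hterm.le.trans (Finset.single_le_sum (f := fun s =>
      (if s • x ∈ Y then (rnd ν s x) ^ (1/2 : ℝ) else 0)) (fun i _ => zero_le) hone)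
  -- lower bound for all measurable A
  have hlow : ∀ A : Set X, MeasurableSet A → (ν.restrict Y) A ≤ nuT ν S Y A := by
    intro A hA
    rw [nuT, withDensity_apply _ hA]
    have h := ae_restrict_of_ae (s := A) hσ1
    calc (ν.restrict Y) A = ∫⁻ _ in A, 1 ∂(ν.restrict Y) := by simp
      _ ≤ ∫⁻ x in A, sigmaLoc ν S Y x ∂(ν.restrict Y) := lintegral_mono_ae h
  -- per-term upper bound
  have hterm_bound : ∀ (A : Set X), MeasurableSet A → ∀ s : Γ,
      (∫⁻ x in A, (if s • x ∈ Y then (rnd ν s x) ^ (1/2 : ℝ) else 0) ∂ν)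
        ≤ (ν A * ν Y) ^ (1/2 : ℝ) := by
    intro A hA s
    set C : Set X := (fun x : X => s • x) ⁻¹' Y with hC
    have hCm : MeasurableSet C := (hmeas s) hY
    set B : Set X := C ∩ A with hB
    have hBm : MeasurableSet B := hCm.inter hA
    -- rewrite integral as an integral over B
    have hrw : (∫⁻ x in A, (if s • x ∈ Y then (rnd ν s x) ^ (1/2 : ℝ) else 0) ∂ν)
        = ∫⁻ x in B, (rnd ν s x) ^ (1/2 : ℝ) ∂ν := by
      have : (fun x : X => (if s • x ∈ Y then (rnd ν s x) ^ (1/2 : ℝ) else 0)) =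
          C.indicator (fun x => (rnd ν s x) ^ (1/2 : ℝ)) := by
        funext x
        by_cases hx : x ∈ C
        · simp [Set.indicator_of_mem hx, hC, Set.mem_preimage] at *
          simp [hx]
        · have hx' : ¬ s • x ∈ Y := hx
          simp [Set.indicator_of_notMem hx, hx']
      rw [this, lintegral_indicator hCm, Measure.restrict_restrict hCm]
    rw [hrw]
    -- Cauchy-Schwarz
    have hconj : Real.HolderConjugate 2 2 := Real.holderConjugate_iff.mpr ⟨by norm_num, by norm_num⟩
    have hCS := ENNReal.lintegral_mul_le_Lp_mul_Lq (ν.restrict B) hconj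
      (f := fun x => (rnd ν s x) ^ (1/2 : ℝ)) (g := fun _ => 1)
      ((Measure.measurable_rnDeriv _ _).pow_const _).aemeasurable aemeasurable_const
    simp only [Pi.mul_apply, mul_one] at hCS
    have hsq : ∀ x : X, ((rnd ν s x) ^ (1/2 : ℝ)) ^ (2 : ℝ) = rnd ν s x := by
      intro x
      rw [← ENNReal.rpow_mul]
      norm_num
    have h2 : (∫⁻ x in B, ((rnd ν s x) ^ (1/2 : ℝ)) ^ (2 : ℝ) ∂ν)
        = ∫⁻ x in B, rnd ν s x ∂ν := by
      congr 1; funext x; exact hsq x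
    -- bound the Radon-Nikodym integral by ν Y
    have hrn : (∫⁻ x in B, rnd ν s x ∂ν) ≤ ν Y := by
      have hle : (∫⁻ x in B, rnd ν s x ∂ν) ≤ (ν.map (fun y : X => s⁻¹ • y)) B :=
        Measure.setLIntegral_rnDeriv_le B
      refine hle.trans ?_
      have hBsub : B ⊆ C := Set.inter_subset_left
      have : (ν.map (fun y : X => s⁻¹ • y)) B ≤ (ν.map (fun y : X => s⁻¹ • y)) C :=
        measure_mono hBsub
      refine this.trans ?_
      rw [Measure.map_apply (hmeas s⁻¹) hCm]
      have : (fun y : X => s⁻¹ • y) ⁻¹' C = Y := by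
        ext x
        simp [hC, Set.mem_preimage, smul_inv_smul]
      rw [this]
    have hone' : (∫⁻ _ in B, (1 : ℝ≥0∞) ^ (2 : ℝ) ∂ν) = ν B := by simp
    have hB_le : ν B ≤ ν A := measure_mono Set.inter_subset_right
    calc (∫⁻ x in B, (rnd ν s x) ^ (1/2 : ℝ) ∂ν)
        ≤ (∫⁻ x in B, ((rnd ν s x) ^ (1/2 : ℝ)) ^ (2 : ℝ) ∂ν) ^ (1/(2:ℝ)) *
          (∫⁻ _ in B, (1 : ℝ≥0∞) ^ (2 : ℝ) ∂ν) ^ (1/(2:ℝ)) := hCS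
      _ = (∫⁻ x in B, rnd ν s x ∂ν) ^ (1/(2:ℝ)) * (ν B) ^ (1/(2:ℝ)) := by
          rw [h2, hone']
      _ ≤ (ν Y) ^ (1/(2:ℝ)) * (ν A) ^ (1/(2:ℝ)) := by
          exact mul_le_mul (ENNReal.rpow_le_rpow hrn (by norm_num))
            (ENNReal.rpow_le_rpow hB_le (by norm_num)) zero_le zero_le
      _ = (ν A * ν Y) ^ (1/2 : ℝ) := by
          rw [ENNReal.mul_rpow_of_nonneg _ _ (by norm_num : (0:ℝ) ≤ 1/2), mul_comm]
  -- upper bound for measurable A ⊆ Y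
  have hup : ∀ A : Set X, MeasurableSet A → A ⊆ Y →
      nuT ν S Y A ≤ (S.card : ℝ≥0∞) * (ν A * ν Y) ^ (1/2 : ℝ) := by
    intro A hA hAY
    have hrestr : (ν.restrict Y).restrict A = ν.restrict A := by
      rw [Measure.restrict_restrict hA, Set.inter_eq_self_of_subset_left hAY]
    have : nuT ν S Y A = ∫⁻ x in A, sigmaLoc ν S Y x ∂ν := by
      rw [nuT, withDensity_apply _ hA, hrestr]
    rw [this]
    have hsum : (∫⁻ x in A, sigmaLoc ν S Y x ∂ν)
        = ∑ s ∈ S, ∫⁻ x in A, (if s • x ∈ Y then (rnd ν s x) ^ (1/2 : ℝ) else 0) ∂ν := by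
      exact lintegral_finset_sum S (fun s _ => hσterm s)
    rw [hsum]
    calc (∑ s ∈ S, ∫⁻ x in A, (if s • x ∈ Y then (rnd ν s x) ^ (1/2 : ℝ) else 0) ∂ν)
        ≤ ∑ _s ∈ S, (ν A * ν Y) ^ (1/2 : ℝ) :=
          Finset.sum_le_sum fun s _ => hterm_bound A hA s
      _ = (S.card : ℝ≥0∞) * (ν A * ν Y) ^ (1/2 : ℝ) := by
          rw [Finset.sum_const, nsmul_eq_mul]
  refine ⟨fun A hA hAY => ?_, ?_, fun A hA => ?_⟩
  · refine ⟨?_, hup A hA hAY⟩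
    have := hlow A hA
    rwa [Measure.restrict_apply hA, Set.inter_eq_self_of_subset_left hAY] at this
  · have := hup Y hY (le_refl _)
    refine lt_of_le_of_lt this ?_
    refine ENNReal.mul_lt_top (ENNReal.natCast_lt_top _) ?_
    exact ENNReal.rpow_lt_top_of_nonneg (by norm_num) (ENNReal.mul_lt_top hYfin hYfin).ne
  · constructor
    · intro h
      exact le_antisymm (h ▸ hlow A hA) zero_le
    · intro h
      have : nuT ν S Y ≪ ν.restrict Y := withDensity_absolutelyContinuous _ _
      exact this h
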